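/- Consider a single-hidden-layer RNN θ = (W_rec, W_ff, b, C) with W_rec ∈ ℝ^{d×d}, W_ff ∈ ℝ^{d×p}, b ∈ ℝ^d with all entries of b strictly nonzero, and C ∈ ℝ^{m×d}. Define the squared norm ‖θ‖² = ‖W_rec‖_F² + ‖W_ff‖_F² + ‖b‖² + ‖C‖_F². Suppose a scaled permutation M = P̃ D (P̃ permutation, D = diag(e^{τ_1},…,e^{τ_d})) satisfies: ‖(M W_rec M⁻¹, M W_ff, M b, C M⁻¹)‖² ≤ ‖(M' W_rec M'⁻¹, M' W_ff, M' b, C M'⁻¹)‖² for all scaled permutations M', and likewise the identity I achieves this minimum. Then D = I. -/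

import Mathlib

open Matrix

/-- Squared Frobenius norm of a matrix. -/
noncomputable def frobSq {m n : ℕ} (A : Matrix (Fin m) (Fin n) ℝ) : ℝ :=
  ∑ i, ∑ j, (A i j) ^ 2

/-- Squared Euclidean norm of a vector. -/
noncomputable def vecSq {n : ℕ} (v : Fin n → ℝ) : ℝ := ∑ i, (v i) ^ 2

/-- Squared norm of the RNN parameters transformed by `M`,
namely `(M Wrec M⁻¹, M Wff, M b, C M⁻¹)`. -/
noncomputable def rnnCost {d p m : ℕ} (Wrec : Matrix (Fin d) (Fin d) ℝ)
    (Wff : Matrix (Fin d) (Fin p) ℝ) (b : Fin d → ℝ)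
    (C : Matrix (Fin m) (Fin d) ℝ) (M : Matrix (Fin d) (Fin d) ℝ) : ℝ :=
  frobSq (M * Wrec * M⁻¹) + frobSq (M * Wff) + vecSq (M.mulVec b)
    + frobSq (C * M⁻¹)

noncomputable def Fcost {d p m : ℕ} (Wrec : Matrix (Fin d) (Fin d) ℝ)
    (Wff : Matrix (Fin d) (Fin p) ℝ) (b : Fin d → ℝ)
    (C : Matrix (Fin m) (Fin d) ℝ) (E : Fin d → ℝ) : ℝ :=
  (∑ i, ∑ j, (E i * Wrec i j * (E j)⁻¹) ^ 2)
  + (∑ i, ∑ j, (E i * Wff i j) ^ 2)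
  + (∑ i, (E i * b i) ^ 2)
  + (∑ i, ∑ j, (C i j * (E j)⁻¹) ^ 2)

lemma frobSq_perm_left {n m : ℕ} (e : Equiv.Perm (Fin n)) (A : Matrix (Fin n) (Fin m) ℝ) :
    frobSq (e.permMatrix ℝ * A) = frobSq A := by
  rw [show e.permMatrix ℝ * A = A.submatrix e id from PEquiv.toMatrix_toPEquiv_mul e A]
  exact Fintype.sum_equiv e _ _ (fun i => rfl)

lemma frobSq_perm_right {n m : ℕ} (e : Equiv.Perm (Fin m)) (A : Matrix (Fin n) (Fin m) ℝ) :
    frobSq (A * e.permMatrix ℝ) = frobSq A := by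
  rw [show A * e.permMatrix ℝ = A.submatrix id e.symm from PEquiv.mul_toMatrix_toPEquiv A e]
  refine Finset.sum_congr rfl fun i _ => ?_
  exact Fintype.sum_equiv e.symm _ _ (fun j => rfl)

lemma permMatrix_mulVec {n : ℕ} (e : Equiv.Perm (Fin n)) (w : Fin n → ℝ) :
    (e.permMatrix ℝ).mulVec w = fun i => w (e i) := by
  funext i
  simp [Equiv.Perm.permMatrix, PEquiv.toMatrix_apply, Equiv.toPEquiv_apply,
    Matrix.mulVec, dotProduct, Option.mem_def, ite_mul]

lemma permMatrix_mul_symm {n : ℕ} (e : Equiv.Perm (Fin n)) :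
    e.permMatrix ℝ * Equiv.Perm.permMatrix ℝ e.symm = 1 := by
  show (e.toPEquiv.toMatrix : Matrix (Fin n) (Fin n) ℝ) * e.symm.toPEquiv.toMatrix = 1
  rw [← PEquiv.toMatrix_trans, ← Equiv.toPEquiv_trans, Equiv.self_trans_symm,
    Equiv.toPEquiv_refl, PEquiv.toMatrix_refl]

lemma rnnCost_perm_diag {d p m : ℕ} (Wrec : Matrix (Fin d) (Fin d) ℝ)
    (Wff : Matrix (Fin d) (Fin p) ℝ) (b : Fin d → ℝ) (C : Matrix (Fin m) (Fin d) ℝ)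
    (e' : Equiv.Perm (Fin d)) (E : Fin d → ℝ) (hE : ∀ i, E i ≠ 0) :
    rnnCost Wrec Wff b C (e'.permMatrix ℝ * diagonal E) = Fcost Wrec Wff b C E := by
  have hdd : diagonal E * diagonal (fun i => (E i)⁻¹) = 1 := by
    rw [diagonal_mul_diagonal]
    convert Matrix.diagonal_one with i
    exact mul_inv_cancel₀ (hE i)
  have hinv : (e'.permMatrix ℝ * diagonal E)⁻¹
      = diagonal (fun i => (E i)⁻¹) * Equiv.Perm.permMatrix ℝ e'.symm := by
    apply Matrix.inv_eq_right_inv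
    calc e'.permMatrix ℝ * diagonal E * (diagonal (fun i => (E i)⁻¹) * Equiv.Perm.permMatrix ℝ e'.symm)
        = e'.permMatrix ℝ * (diagonal E * diagonal (fun i => (E i)⁻¹)) * Equiv.Perm.permMatrix ℝ e'.symm := by
          simp only [Matrix.mul_assoc]
      _ = e'.permMatrix ℝ * Equiv.Perm.permMatrix ℝ e'.symm := by rw [hdd, Matrix.mul_one]
      _ = 1 := permMatrix_mul_symm e'
  unfold rnnCost
  rw [hinv]
  have h1 : frobSq (e'.permMatrix ℝ * diagonal E * Wrec *
      (diagonal (fun i => (E i)⁻¹) * Equiv.Perm.permMatrix ℝ e'.symm))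
      = ∑ i, ∑ j, (E i * Wrec i j * (E j)⁻¹) ^ 2 := by
    have : e'.permMatrix ℝ * diagonal E * Wrec *
        (diagonal (fun i => (E i)⁻¹) * Equiv.Perm.permMatrix ℝ e'.symm)
        = e'.permMatrix ℝ * (diagonal E * Wrec * diagonal (fun i => (E i)⁻¹))
          * Equiv.Perm.permMatrix ℝ e'.symm := by simp only [Matrix.mul_assoc]
    rw [this, frobSq_perm_right, frobSq_perm_left]
    refine Finset.sum_congr rfl fun i _ => Finset.sum_congr rfl fun j _ => ?_
    rw [Matrix.mul_diagonal, Matrix.diagonal_mul]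
  have h2 : frobSq (e'.permMatrix ℝ * diagonal E * Wff)
      = ∑ i, ∑ j, (E i * Wff i j) ^ 2 := by
    rw [Matrix.mul_assoc, frobSq_perm_left]
    refine Finset.sum_congr rfl fun i _ => Finset.sum_congr rfl fun j _ => ?_
    rw [Matrix.diagonal_mul]
  have h3 : vecSq ((e'.permMatrix ℝ * diagonal E).mulVec b)
      = ∑ i, (E i * b i) ^ 2 := by
    rw [← Matrix.mulVec_mulVec, permMatrix_mulVec]
    unfold vecSq
    refine Fintype.sum_equiv e' _ _ fun i => ?_
    simp [Matrix.mulVec_diagonal]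
  have h4 : frobSq (C * (diagonal (fun i => (E i)⁻¹) * Equiv.Perm.permMatrix ℝ e'.symm))
      = ∑ i, ∑ j, (C i j * (E j)⁻¹) ^ 2 := by
    rw [← Matrix.mul_assoc, frobSq_perm_right]
    refine Finset.sum_congr rfl fun i _ => Finset.sum_congr rfl fun j _ => ?_
    rw [Matrix.mul_diagonal]
  rw [h1, h2, h3, h4]; rfl

lemma combo_nonneg (A w a : ℝ) (h : a ^ 2 = A * w) : 0 ≤ A ^ 2 + w ^ 2 - 2 * a ^ 2 := by
  nlinarith [sq_nonneg (A - w)]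

lemma combo_eq (A w a : ℝ) (h : a ^ 2 = A * w) : A ^ 2 + w ^ 2 - 2 * a ^ 2 = (A - w) ^ 2 := by
  rw [h]; ring

/-- If a scaled permutation `M = P̃ D` minimizes the squared parameter norm of
the transformed RNN over all scaled permutations, and the identity also
achieves this minimum, then (assuming all bias entries are nonzero) the
scaling part is trivial: `D = I`. -/
theorem scaled_perm_min_norm_scaling_trivial (d p m : ℕ)
    (Wrec : Matrix (Fin d) (Fin d) ℝ) (Wff : Matrix (Fin d) (Fin p) ℝ)
    (b : Fin d → ℝ) (hb : ∀ i, b i ≠ 0)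
    (C : Matrix (Fin m) (Fin d) ℝ)
    (e : Equiv.Perm (Fin d)) (D : Fin d → ℝ) (hD : ∀ i, 0 < D i)
    (hmin : ∀ (e' : Equiv.Perm (Fin d)) (D' : Fin d → ℝ), (∀ i, 0 < D' i) →
      rnnCost Wrec Wff b C (e.permMatrix ℝ * Matrix.diagonal D) ≤
        rnnCost Wrec Wff b C (e'.permMatrix ℝ * Matrix.diagonal D'))
    (hminId : ∀ (e' : Equiv.Perm (Fin d)) (D' : Fin d → ℝ), (∀ i, 0 < D' i) →
      rnnCost Wrec Wff b C 1 ≤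
        rnnCost Wrec Wff b C (e'.permMatrix ℝ * Matrix.diagonal D')) :
    ∀ i, D i = 1 := by
  set S : Fin d → ℝ := fun i => Real.sqrt (D i) with hSdef
  have hS : ∀ i, 0 < S i := fun i => Real.sqrt_pos.mpr (hD i)
  have hSsq : ∀ i, S i ^ 2 = D i := fun i => Real.sq_sqrt (hD i).le
  have hone : (∀ i, (0:ℝ) < (fun _ : Fin d => (1:ℝ)) i) := fun _ => one_pos
  -- identity cost equals Fcost of the all-ones vector
  have hId : rnnCost Wrec Wff b C 1 = Fcost Wrec Wff b C (fun _ => 1) := by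
    simp [rnnCost, Fcost, frobSq, vecSq]
  -- F-version of the minimality hypotheses
  have h1min : ∀ (E : Fin d → ℝ), (∀ i, 0 < E i) →
      Fcost Wrec Wff b C (fun _ => 1) ≤ Fcost Wrec Wff b C E := by
    intro E hE
    have := hminId 1 E hE
    rwa [rnnCost_perm_diag Wrec Wff b C 1 E (fun i => (hE i).ne'), hId] at this
  have hDmin : ∀ (E : Fin d → ℝ), (∀ i, 0 < E i) →
      Fcost Wrec Wff b C D ≤ Fcost Wrec Wff b C E := by
    intro E hE
    have := hmin 1 E hE
    rwa [rnnCost_perm_diag Wrec Wff b C 1 E (fun i => (hE i).ne'),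
      rnnCost_perm_diag Wrec Wff b C e D (fun i => (hD i).ne')] at this
  have hFD1 : Fcost Wrec Wff b C D = Fcost Wrec Wff b C (fun _ => 1) :=
    le_antisymm (hDmin _ hone) (h1min D hD)
  have hFS : Fcost Wrec Wff b C (fun _ => 1) ≤ Fcost Wrec Wff b C S := h1min S hS
  -- the four blocks
  have hR : 0 ≤ (∑ i, ∑ j, (D i * Wrec i j * (D j)⁻¹) ^ 2)
      + (∑ i, ∑ j, ((1:ℝ) * Wrec i j * (1:ℝ)⁻¹) ^ 2)
      - 2 * (∑ i, ∑ j, (S i * Wrec i j * (S j)⁻¹) ^ 2) := by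
    rw [Finset.mul_sum, ← Finset.sum_add_distrib, ← Finset.sum_sub_distrib]
    refine Finset.sum_nonneg fun i _ => ?_
    rw [Finset.mul_sum, ← Finset.sum_add_distrib, ← Finset.sum_sub_distrib]
    refine Finset.sum_nonneg fun j _ => ?_
    refine combo_nonneg _ _ _ ?_
    have := hSsq i; have := hSsq j
    rw [mul_pow, mul_pow, inv_pow, hSsq i, hSsq j]; ring
  have hF : 0 ≤ (∑ i, ∑ j, (D i * Wff i j) ^ 2)
      + (∑ i, ∑ j, ((1:ℝ) * Wff i j) ^ 2)
      - 2 * (∑ i, ∑ j, (S i * Wff i j) ^ 2) := by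
    rw [Finset.mul_sum, ← Finset.sum_add_distrib, ← Finset.sum_sub_distrib]
    refine Finset.sum_nonneg fun i _ => ?_
    rw [Finset.mul_sum, ← Finset.sum_add_distrib, ← Finset.sum_sub_distrib]
    refine Finset.sum_nonneg fun j _ => ?_
    refine combo_nonneg _ _ _ ?_
    rw [mul_pow, hSsq i]; ring
  have hC : 0 ≤ (∑ i, ∑ j, (C i j * (D j)⁻¹) ^ 2)
      + (∑ i, ∑ j, (C i j * (1:ℝ)⁻¹) ^ 2)
      - 2 * (∑ i, ∑ j, (C i j * (S j)⁻¹) ^ 2) := by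
    rw [Finset.mul_sum, ← Finset.sum_add_distrib, ← Finset.sum_sub_distrib]
    refine Finset.sum_nonneg fun i _ => ?_
    rw [Finset.mul_sum, ← Finset.sum_add_distrib, ← Finset.sum_sub_distrib]
    refine Finset.sum_nonneg fun j _ => ?_
    refine combo_nonneg _ _ _ ?_
    rw [mul_pow, inv_pow, hSsq j]; ring
  have hB : (∑ i, (D i * b i) ^ 2) + (∑ i, ((1:ℝ) * b i) ^ 2)
      - 2 * (∑ i, (S i * b i) ^ 2)
      = ∑ i, ((D i - 1) * b i) ^ 2 := by
    rw [Finset.mul_sum, ← Finset.sum_add_distrib, ← Finset.sum_sub_distrib]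
    refine Finset.sum_congr rfl fun i _ => ?_
    have h : (S i * b i) ^ 2 = (D i * b i) * (1 * b i) := by
      rw [mul_pow, hSsq i]; ring
    calc (D i * b i) ^ 2 + (1 * b i) ^ 2 - 2 * (S i * b i) ^ 2
        = (D i * b i - 1 * b i) ^ 2 := combo_eq _ _ _ h
      _ = ((D i - 1) * b i) ^ 2 := by ring
  -- combine
  have hkey : ∑ i, ((D i - 1) * b i) ^ 2 ≤ 0 := by
    have hexp : Fcost Wrec Wff b C D + Fcost Wrec Wff b C (fun _ => 1)
        - 2 * Fcost Wrec Wff b C S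
        = ((∑ i, ∑ j, (D i * Wrec i j * (D j)⁻¹) ^ 2)
            + (∑ i, ∑ j, ((1:ℝ) * Wrec i j * (1:ℝ)⁻¹) ^ 2)
            - 2 * (∑ i, ∑ j, (S i * Wrec i j * (S j)⁻¹) ^ 2))
          + ((∑ i, ∑ j, (D i * Wff i j) ^ 2)
            + (∑ i, ∑ j, ((1:ℝ) * Wff i j) ^ 2)
            - 2 * (∑ i, ∑ j, (S i * Wff i j) ^ 2))
          + ((∑ i, (D i * b i) ^ 2) + (∑ i, ((1:ℝ) * b i) ^ 2)
            - 2 * (∑ i, (S i * b i) ^ 2))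
          + ((∑ i, ∑ j, (C i j * (D j)⁻¹) ^ 2)
            + (∑ i, ∑ j, (C i j * (1:ℝ)⁻¹) ^ 2)
            - 2 * (∑ i, ∑ j, (C i j * (S j)⁻¹) ^ 2)) := by
      unfold Fcost; ring
    have hle0 : Fcost Wrec Wff b C D + Fcost Wrec Wff b C (fun _ => 1)
        - 2 * Fcost Wrec Wff b C S ≤ 0 := by linarith
    rw [hexp] at hle0
    linarith [hR, hF, hC, hB.symm]
  intro i
  have hterm : ∀ j ∈ Finset.univ, (0:ℝ) ≤ ((D j - 1) * b j) ^ 2 :=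
    fun j _ => sq_nonneg _
  have hzero : ((D i - 1) * b i) ^ 2 = 0 := by
    have := (Finset.sum_eq_zero_iff_of_nonneg hterm).mp
      (le_antisymm hkey (Finset.sum_nonneg hterm)) i (Finset.mem_univ i)
    exact this
  have := pow_eq_zero_iff (n := 2) (by norm_num) |>.mp hzero
  rcases mul_eq_zero.mp this with h | h
  · linarith [h]
  · exact absurd h (hb i)
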